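/- Exact ruin probability formula (Tichy): in the compound Poisson model with exponential(μ) claims, intensity λ, and monotone premium function p with p > 0, the function ψ(u) = ∫ᵤ^∞ (γ₀λ/p(x)) exp(λq(x) − μx) dx, with 1/γ₀ = 1 + λ∫₀^∞ p(x)^{-1} exp(λq(x) − μx) dx and q(x) = ∫₀ˣ dy/p(y), satisfies the integro-differential ruin equation p(u)ψ'(u) = λψ(u) − λ∫₀ᵘ ψ(u−y) μe^{−μy} dy − λ e^{−μu}, together with ψ(∞) = 0. -/

import Mathlib

open MeasureTheory Filter

/-- `q x = ∫₀ˣ dy / p(y)`. -/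
noncomputable def qfun (p : ℝ → ℝ) (x : ℝ) : ℝ := ∫ y in (0 : ℝ)..x, 1 / p y

/-- The normalizing constant `γ₀` in Tichy's ruin probability formula. -/
noncomputable def gamma0 (p : ℝ → ℝ) (lam mu : ℝ) : ℝ :=
  (1 + lam * ∫ x in Set.Ioi (0 : ℝ), Real.exp (lam * qfun p x - mu * x) / p x)⁻¹

/-- Tichy's ruin probability. -/
noncomputable def ruinProb (p : ℝ → ℝ) (lam mu : ℝ) (u : ℝ) : ℝ :=
  ∫ x in Set.Ioi u, gamma0 p lam mu * lam / p x * Real.exp (lam * qfun p x - mu * x)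

theorem stmt13 (p : ℝ → ℝ) (lam mu : ℝ) (hlam : 0 < lam) (hmu : 0 < mu)
    (hp : ContDiff ℝ 1 p) (hppos : ∀ u, 0 < p u)
    (hint : IntegrableOn (fun x => Real.exp (lam * qfun p x - mu * x) / p x)
      (Set.Ioi (0 : ℝ))) :
    (∀ u ∈ Set.Ici (0 : ℝ),
        p u * deriv (ruinProb p lam mu) u - lam * ruinProb p lam mu u +
          lam * mu * (∫ y in (0 : ℝ)..u, ruinProb p lam mu y * Real.exp (-mu * (u - y))) +
          lam * Real.exp (-mu * u) = 0) ∧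
      Tendsto (ruinProb p lam mu) atTop (nhds 0) := by
  have hpC : Continuous p := hp.continuous
  have hpne : ∀ x, p x ≠ 0 := fun x => (hppos x).ne'
  have hinvC : Continuous (fun x => 1 / p x) := continuous_const.div hpC hpne
  set γ : ℝ := gamma0 p lam mu with hγdef
  -- derivative of q
  have hq : ∀ x : ℝ, HasDerivAt (qfun p) (1 / p x) x := by
    intro x
    exact intervalIntegral.integral_hasDerivAt_right (hinvC.intervalIntegrable _ _)
      (hinvC.stronglyMeasurableAtFilter _ _) hinvC.continuousAt
  have hqC : Continuous (qfun p) :=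
    continuous_iff_continuousAt.2 fun x => (hq x).continuousAt
  set g : ℝ → ℝ := fun x => γ * lam / p x * Real.exp (lam * qfun p x - mu * x) with hgdef
  have hgC : Continuous g := by
    apply (continuous_const.div hpC hpne).mul
    exact Real.continuous_exp.comp ((continuous_const.mul hqC).sub (continuous_const.mul continuous_id))
  have hruin : ∀ v : ℝ, ruinProb p lam mu v = ∫ x in Set.Ioi v, g x := fun v => rfl
  have hgf : (fun x => γ * lam * (Real.exp (lam * qfun p x - mu * x) / p x)) = g := by
    funext x; simp only [hgdef]; ring
  have hgint0 : IntegrableOn g (Set.Ioi (0:ℝ)) := by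
    rw [← hgf]; exact hint.const_mul _
  have hgint : ∀ u : ℝ, IntegrableOn g (Set.Ioi u) := by
    intro u
    rcases le_total 0 u with h | h
    · exact hgint0.mono_set (Set.Ioi_subset_Ioi h)
    · rw [← Set.Ioc_union_Ioi_eq_Ioi h]
      exact (hgC.integrableOn_Ioc).union hgint0
  -- splitting identity
  have key : ∀ a b : ℝ, a ≤ b →
      (∫ x in Set.Ioi a, g x) = (∫ x in a..b, g x) + ∫ x in Set.Ioi b, g x := by
    intro a b hab
    rw [intervalIntegral.integral_of_le hab,
      ← setIntegral_union Set.Ioc_disjoint_Ioi_same measurableSet_Ioi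
        ((hgint a).mono_set Set.Ioc_subset_Ioi_self) (hgint b),
      Set.Ioc_union_Ioi_eq_Ioi hab]
  have hsplit : ∀ u : ℝ, ruinProb p lam mu u = ruinProb p lam mu 0 - ∫ x in (0:ℝ)..u, g x := by
    intro u
    rcases le_total 0 u with h | h
    · have := key 0 u h
      rw [hruin, hruin] at *
      linarith
    · have := key u 0 h
      rw [hruin u, hruin 0, intervalIntegral.integral_symm]
      linarith
  have hψ : ∀ u : ℝ, HasDerivAt (ruinProb p lam mu) (-(g u)) u := by
    intro u
    have h1 : HasDerivAt (fun v => ∫ x in (0:ℝ)..v, g x) (g u) u :=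
      intervalIntegral.integral_hasDerivAt_right (hgC.intervalIntegrable _ _)
        (hgC.stronglyMeasurableAtFilter _ _) hgC.continuousAt
    have heq : ruinProb p lam mu = fun v => ruinProb p lam mu 0 - ∫ x in (0:ℝ)..v, g x :=
      funext hsplit
    rw [heq]
    have h2 := (hasDerivAt_const u (ruinProb p lam mu 0)).sub h1
    simp only [zero_sub] at h2
    exact h2
  have hψC : Continuous (ruinProb p lam mu) :=
    continuous_iff_continuousAt.2 fun x => (hψ x).continuousAt
  -- the auxiliary function H
  set H : ℝ → ℝ := fun u => γ * Real.exp (lam * qfun p u) + Real.exp (mu * u) * ruinProb p lam mu u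
      - mu * (∫ y in (0:ℝ)..u, ruinProb p lam mu y * Real.exp (mu * y)) - 1 with hHdef
  have hintC : Continuous (fun y => ruinProb p lam mu y * Real.exp (mu * y)) :=
    hψC.mul (Real.continuous_exp.comp (continuous_const.mul continuous_id))
  have hH' : ∀ u : ℝ, HasDerivAt H 0 u := by
    intro u
    have h1 : HasDerivAt (fun u => γ * Real.exp (lam * qfun p u))
        (γ * (Real.exp (lam * qfun p u) * (lam * (1 / p u)))) u :=
      (((hq u).const_mul lam).exp).const_mul γ
    have h2 : HasDerivAt (fun u => Real.exp (mu * u) * ruinProb p lam mu u)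
        (Real.exp (mu * u) * (mu * 1) * ruinProb p lam mu u + Real.exp (mu * u) * (-(g u))) u :=
      (((hasDerivAt_id u).const_mul mu).exp).mul (hψ u)
    have h3 : HasDerivAt (fun u => mu * ∫ y in (0:ℝ)..u, ruinProb p lam mu y * Real.exp (mu * y))
        (mu * (ruinProb p lam mu u * Real.exp (mu * u))) u := by
      exact (intervalIntegral.integral_hasDerivAt_right (hintC.intervalIntegrable _ _)
        (hintC.stronglyMeasurableAtFilter _ _) hintC.continuousAt).const_mul mu
    have h4 := ((h1.add h2).sub h3).sub (hasDerivAt_const u (1:ℝ))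
    refine h4.congr_deriv ?_
    simp only [hgdef]
    rw [Real.exp_sub]
    field_simp [hpne u]
    ring
  have hI0 : (0:ℝ) ≤ ∫ x in Set.Ioi (0:ℝ), Real.exp (lam * qfun p x - mu * x) / p x :=
    setIntegral_nonneg measurableSet_Ioi fun x _ =>
      div_nonneg (Real.exp_pos _).le (hppos x).le
  have hγpos : 0 < 1 + lam * ∫ x in Set.Ioi (0:ℝ), Real.exp (lam * qfun p x - mu * x) / p x := by
    nlinarith
  have hψ0 : ruinProb p lam mu 0 = 1 - γ := by
    have h1 : (∫ x in Set.Ioi (0:ℝ), g x)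
        = γ * lam * ∫ x in Set.Ioi (0:ℝ), Real.exp (lam * qfun p x - mu * x) / p x := by
      rw [← hgf]
      exact integral_const_mul _ _
    rw [hruin, h1, hγdef, gamma0]
    rw [eq_sub_iff_add_eq, ← eq_sub_iff_add_eq', inv_eq_iff_eq_inv] at *
    field_simp
    ring
  have hq0 : qfun p 0 = 0 := intervalIntegral.integral_same
  have hH0 : H 0 = 0 := by
    simp [hHdef, hq0, hψ0]
  have hHzero : ∀ u : ℝ, H u = 0 := by
    intro u
    have := is_const_of_deriv_eq_zero (f := H) (fun x => (hH' x).differentiableAt)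
      (fun x => (hH' x).deriv) u 0
    rw [this, hH0]
  refine ⟨fun u _ => ?_, ?_⟩
  · have hderiv : deriv (ruinProb p lam mu) u = -(g u) := (hψ u).deriv
    have hconv : (∫ y in (0:ℝ)..u, ruinProb p lam mu y * Real.exp (-mu * (u - y)))
        = Real.exp (-(mu * u)) * ∫ y in (0:ℝ)..u, ruinProb p lam mu y * Real.exp (mu * y) := by
      rw [← intervalIntegral.integral_const_mul]
      congr 1
      funext y
      rw [show -mu * (u - y) = -(mu * u) + mu * y by ring, Real.exp_add]
      ring
    have alg : ∀ (P M Q J C psi : ℝ), P ≠ 0 → M ≠ 0 →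
        (C * Q + M * psi - mu * J - 1 = 0) →
        P * -(C * lam / P * (Q / M)) - lam * psi + lam * mu * (M⁻¹ * J) + lam * M⁻¹ = 0 := by
      intro P M Q J C psi hP hM h
      field_simp
      linear_combination (-lam) * h
    have hHu := hHzero u
    simp only [hHdef] at hHu
    rw [hderiv, hconv]
    simp only [hgdef]
    rw [Real.exp_sub, neg_mul, Real.exp_neg]
    exact alg (p u) (Real.exp (mu * u)) (Real.exp (lam * qfun p u)) _ γ _ (hpne u)
      (Real.exp_ne_zero _) hHu
  · have h1 : Tendsto (fun u => ∫ x in (0:ℝ)..u, g x) atTop (nhds (∫ x in Set.Ioi (0:ℝ), g x)) :=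
      intervalIntegral_tendsto_integral_Ioi 0 hgint0 tendsto_id
    have heq : ruinProb p lam mu = fun v => ruinProb p lam mu 0 - ∫ x in (0:ℝ)..v, g x :=
      funext hsplit
    have h2 := (tendsto_const_nhds :
        Tendsto (fun _ : ℝ => (∫ x in Set.Ioi (0:ℝ), g x)) atTop _).sub h1
    rw [heq, hruin]
    simpa using h2
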